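/- The function Ψ_x is continuously differentiable on ℝ^q × ℝ, with gradient ∇Ψ_x(u,v) = (∫ y e^{(⟨u,y⟩+v)K(z)} K(z) f(x,y) dz dy, ∫ e^{(⟨u,y⟩+v)K(z)} K(z) f(x,y) dz dy). -/

import Mathlib

open MeasureTheory Real

lemma abs_exp_sub_one_le' (t : ℝ) : |Real.exp t - 1| ≤ |t| * Real.exp |t| := by
  rcases le_or_gt 0 t with h | h
  · rw [abs_of_nonneg h, abs_of_nonneg (sub_nonneg.2 (Real.one_le_exp h))]
    have h1 : 1 - t ≤ Real.exp (-t) := by have := Real.add_one_le_exp (-t); linarith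
    have h2 : Real.exp (-t) * Real.exp t = 1 := by
      rw [← Real.exp_add]; simp
    nlinarith [Real.exp_pos t, mul_le_mul_of_nonneg_right h1 (Real.exp_pos t).le]
  · rw [abs_of_neg h, abs_of_nonpos (sub_nonpos.2 (Real.exp_le_one_iff.2 h.le))]
    have h1 := Real.add_one_le_exp t
    have h2 : 1 ≤ Real.exp (-t) := Real.one_le_exp (by linarith)
    nlinarith

set_option maxHeartbeats 1600000 in
/-- `Ψ_x` is continuously differentiable on `ℝ^q × ℝ`, and its differential acts on a direction
`(u',v')` as `∫ (⟨u',y⟩ + v') e^{(⟨u,y⟩+v)K(z)} K(z) f(x,y) dz dy` (which encodes the gradient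
`(∫ y e^{(⟨u,y⟩+v)K(z)} K(z) f, ∫ e^{(⟨u,y⟩+v)K(z)} K(z) f)`). -/
theorem stmt4 (d q : ℕ)
    (K : EuclideanSpace ℝ (Fin d) → ℝ)
    (f : EuclideanSpace ℝ (Fin d) → EuclideanSpace ℝ (Fin q) → ℝ)
    (x : EuclideanSpace ℝ (Fin d))
    (hKmeas : Measurable K) (hKbdd : ∃ M : ℝ, ∀ z, |K z| ≤ M)
    (hKint : Integrable K)
    (hfmeas : Measurable (f x)) (hfnn : ∀ y, 0 ≤ f x y)
    (hfprob : ∫ y, f x y = 1)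
    (hmom : ∀ (m ρ : ℝ), 0 ≤ m → 0 ≤ ρ →
      Integrable (fun y : EuclideanSpace ℝ (Fin q) =>
        ‖y‖ ^ m * Real.exp (ρ * ‖y‖) * f x y)) :
    ContDiff ℝ 1
      (fun w : EuclideanSpace ℝ (Fin q) × ℝ =>
        ∫ p : EuclideanSpace ℝ (Fin d) × EuclideanSpace ℝ (Fin q),
          (Real.exp (((inner ℝ w.1 p.2 : ℝ) + w.2) * K p.1) - 1) * f x p.2)
    ∧ ∀ (u : EuclideanSpace ℝ (Fin q)) (v : ℝ) (u' : EuclideanSpace ℝ (Fin q)) (v' : ℝ),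
      (fderiv ℝ
        (fun w : EuclideanSpace ℝ (Fin q) × ℝ =>
          ∫ p : EuclideanSpace ℝ (Fin d) × EuclideanSpace ℝ (Fin q),
            (Real.exp (((inner ℝ w.1 p.2 : ℝ) + w.2) * K p.1) - 1) * f x p.2) (u, v)) (u', v')
      = ∫ p : EuclideanSpace ℝ (Fin d) × EuclideanSpace ℝ (Fin q),
          ((inner ℝ u' p.2 : ℝ) + v') * Real.exp (((inner ℝ u p.2 : ℝ) + v) * K p.1)
            * K p.1 * f x p.2 := by
  obtain ⟨M₀, hM₀⟩ := hKbdd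
  set M : ℝ := max M₀ 0 with hMdef
  have hM : ∀ z, |K z| ≤ M := fun z => (hM₀ z).trans (le_max_left _ _)
  have hMnn : 0 ≤ M := le_max_right _ _
  set G : (EuclideanSpace ℝ (Fin q) × ℝ) → ℝ := fun w =>
    ∫ p : EuclideanSpace ℝ (Fin d) × EuclideanSpace ℝ (Fin q),
      (Real.exp (((inner ℝ w.1 p.2 : ℝ) + w.2) * K p.1) - 1) * f x p.2 with hGdef
  set L : EuclideanSpace ℝ (Fin q) → (EuclideanSpace ℝ (Fin q) × ℝ) →L[ℝ] ℝ :=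
    fun y => (innerSL ℝ y).comp (ContinuousLinearMap.fst ℝ (EuclideanSpace ℝ (Fin q)) ℝ)
      + ContinuousLinearMap.snd ℝ (EuclideanSpace ℝ (Fin q)) ℝ with hLdef
  have hLapp : ∀ (y : EuclideanSpace ℝ (Fin q)) (w : EuclideanSpace ℝ (Fin q) × ℝ),
      L y w = (inner ℝ y w.1 : ℝ) + w.2 := by
    intro y w; simp [hLdef]
  have hLnorm : ∀ y : EuclideanSpace ℝ (Fin q), ‖L y‖ ≤ ‖y‖ + 1 := by
    intro y
    refine ContinuousLinearMap.opNorm_le_bound _ (by positivity) (fun w => ?_)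
    rw [hLapp, Real.norm_eq_abs]
    calc |(inner ℝ y w.1 : ℝ) + w.2| ≤ |(inner ℝ y w.1 : ℝ)| + |w.2| := abs_add_le _ _
      _ ≤ ‖y‖ * ‖w.1‖ + ‖w.2‖ := by
          refine add_le_add (abs_real_inner_le_norm _ _) (le_of_eq ?_)
          exact (Real.norm_eq_abs _).symm
      _ ≤ ‖y‖ * ‖w‖ + ‖w‖ := add_le_add
          (mul_le_mul_of_nonneg_left (norm_fst_le w) (norm_nonneg _)) (norm_snd_le w)
      _ = (‖y‖ + 1) * ‖w‖ := by ring
  have hLcont : Continuous L := by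
    rw [hLdef]
    exact (Continuous.clm_comp (innerSL ℝ).continuous continuous_const).add continuous_const
  set c : (EuclideanSpace ℝ (Fin q) × ℝ) →
      (EuclideanSpace ℝ (Fin d) × EuclideanSpace ℝ (Fin q)) → ℝ :=
    fun w p => Real.exp (((inner ℝ w.1 p.2 : ℝ) + w.2) * K p.1) * K p.1 * f x p.2 with hcdef
  set F' : (EuclideanSpace ℝ (Fin q) × ℝ) →
      (EuclideanSpace ℝ (Fin d) × EuclideanSpace ℝ (Fin q)) →
      ((EuclideanSpace ℝ (Fin q) × ℝ) →L[ℝ] ℝ) := fun w p => c w p • L p.2 with hF'def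
  -- derivative of the integrand
  have hkey : ∀ (p : EuclideanSpace ℝ (Fin d) × EuclideanSpace ℝ (Fin q))
      (w : EuclideanSpace ℝ (Fin q) × ℝ), HasFDerivAt
      (fun w : EuclideanSpace ℝ (Fin q) × ℝ =>
        (Real.exp (((inner ℝ w.1 p.2 : ℝ) + w.2) * K p.1) - 1) * f x p.2)
      (F' w p) w := by
    intro p w
    have h0 : (fun w : EuclideanSpace ℝ (Fin q) × ℝ => (inner ℝ w.1 p.2 : ℝ) + w.2)
        = fun w => L p.2 w := by
      funext w; rw [hLapp, real_inner_comm]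
    have h1 : HasFDerivAt (fun w : EuclideanSpace ℝ (Fin q) × ℝ => (inner ℝ w.1 p.2 : ℝ) + w.2)
        (L p.2) w := by
      rw [h0]; exact (L p.2).hasFDerivAt
    have h2 := (((h1.mul_const (K p.1)).exp).sub_const 1).mul_const (f x p.2)
    have hsc : F' w p = f x p.2 • (Real.exp (((inner ℝ w.1 p.2 : ℝ) + w.2) * K p.1) •
        ((K p.1) • L p.2)) := by
      simp only [hF'def, hcdef, smul_smul]
      congr 1
      ring
    rw [hsc]
    exact h2
  -- measurability
  have hFmeas : ∀ w : EuclideanSpace ℝ (Fin q) × ℝ, AEStronglyMeasurable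
      (fun p : EuclideanSpace ℝ (Fin d) × EuclideanSpace ℝ (Fin q) =>
        (Real.exp (((inner ℝ w.1 p.2 : ℝ) + w.2) * K p.1) - 1) * f x p.2) volume := by
    intro w
    have hi : Measurable (fun p : EuclideanSpace ℝ (Fin d) × EuclideanSpace ℝ (Fin q) =>
        (inner ℝ w.1 p.2 : ℝ)) := (continuous_const.inner continuous_snd).measurable
    exact (((((hi.add_const w.2).mul (hKmeas.comp measurable_fst)).exp).sub_const 1).mul
      (hfmeas.comp measurable_snd)).aestronglyMeasurable
  have hcmeas : ∀ w : EuclideanSpace ℝ (Fin q) × ℝ, Measurable (c w) := by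
    intro w
    have hi : Measurable (fun p : EuclideanSpace ℝ (Fin d) × EuclideanSpace ℝ (Fin q) =>
        (inner ℝ w.1 p.2 : ℝ)) := (continuous_const.inner continuous_snd).measurable
    exact ((((hi.add_const w.2).mul (hKmeas.comp measurable_fst)).exp).mul
      (hKmeas.comp measurable_fst)).mul (hfmeas.comp measurable_snd)
  have hF'meas : ∀ w : EuclideanSpace ℝ (Fin q) × ℝ,
      AEStronglyMeasurable (F' w) volume := by
    intro w
    exact ((hcmeas w).aestronglyMeasurable).smul
      ((hLcont.comp continuous_snd).aestronglyMeasurable)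
  -- main local analysis at an arbitrary point
  have main : ∀ w₀ : EuclideanSpace ℝ (Fin q) × ℝ,
      HasFDerivAt G (∫ p, F' w₀ p) w₀ ∧ Integrable (F' w₀)
        ∧ ContinuousAt (fun w => ∫ p, F' w p) w₀ := by
    intro w₀
    set R1 : ℝ := ‖w₀.1‖ + 1 with hR1def
    set R2 : ℝ := |w₀.2| + 1 with hR2def
    have hR1nn : 0 ≤ R1 := by rw [hR1def]; positivity
    have hR2nn : 0 ≤ R2 := by rw [hR2def]; positivity
    have h1le : (1:ℝ) ≤ R1 + R2 := by
      rw [hR1def, hR2def]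
      have := norm_nonneg w₀.1; have := abs_nonneg w₀.2; linarith
    set ρ : ℝ := M * R1 with hρdef
    have hρ : 0 ≤ ρ := mul_nonneg hMnn hR1nn
    set Cst : ℝ := (R1 + R2) * Real.exp (M * R2) with hCstdef
    set bound : (EuclideanSpace ℝ (Fin d) × EuclideanSpace ℝ (Fin q)) → ℝ :=
      fun p => |K p.1| * (Cst * ((‖p.2‖ + 1) * Real.exp (ρ * ‖p.2‖) * f x p.2)) with hbdef
    -- bound integrable
    have hgy : Integrable (fun y : EuclideanSpace ℝ (Fin q) =>
        Cst * ((‖y‖ + 1) * Real.exp (ρ * ‖y‖) * f x y)) := by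
      have h1 := hmom 1 ρ zero_le_one hρ
      have h0 := hmom 0 ρ le_rfl hρ
      simp only [Real.rpow_one, Real.rpow_zero, one_mul] at h1 h0
      have heq : (fun y : EuclideanSpace ℝ (Fin q) =>
          (‖y‖ + 1) * Real.exp (ρ * ‖y‖) * f x y)
          = fun y => ‖y‖ * Real.exp (ρ * ‖y‖) * f x y + Real.exp (ρ * ‖y‖) * f x y := by
        funext y; ring
      have h2 : Integrable (fun y : EuclideanSpace ℝ (Fin q) =>
          ‖y‖ * Real.exp (ρ * ‖y‖) * f x y + Real.exp (ρ * ‖y‖) * f x y) := h1.add h0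
      rw [← heq] at h2
      exact h2.const_mul Cst
    have hbound_int : Integrable bound := by
      rw [hbdef, Measure.volume_eq_prod]
      exact hKint.abs.mul_prod hgy
    -- pointwise estimates
    have hinner : ∀ (w : EuclideanSpace ℝ (Fin q) × ℝ), ‖w.1‖ ≤ R1 → |w.2| ≤ R2 →
        ∀ p : EuclideanSpace ℝ (Fin d) × EuclideanSpace ℝ (Fin q),
        |(inner ℝ w.1 p.2 : ℝ) + w.2| ≤ R1 * ‖p.2‖ + R2 := by
      intro w h1 h2 p
      calc |(inner ℝ w.1 p.2 : ℝ) + w.2| ≤ |(inner ℝ w.1 p.2 : ℝ)| + |w.2| := abs_add_le _ _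
        _ ≤ ‖w.1‖ * ‖p.2‖ + |w.2| :=
            add_le_add (abs_real_inner_le_norm _ _) le_rfl
        _ ≤ R1 * ‖p.2‖ + R2 :=
            add_le_add (mul_le_mul_of_nonneg_right h1 (norm_nonneg _)) h2
    have hargle : ∀ (w : EuclideanSpace ℝ (Fin q) × ℝ), ‖w.1‖ ≤ R1 → |w.2| ≤ R2 →
        ∀ p : EuclideanSpace ℝ (Fin d) × EuclideanSpace ℝ (Fin q),
        |((inner ℝ w.1 p.2 : ℝ) + w.2) * K p.1| ≤ ρ * ‖p.2‖ + M * R2 := by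
      intro w h1 h2 p
      rw [abs_mul]
      have ha := hinner w h1 h2 p
      have h0 : 0 ≤ R1 * ‖p.2‖ + R2 := by positivity
      calc |(inner ℝ w.1 p.2 : ℝ) + w.2| * |K p.1| ≤ (R1 * ‖p.2‖ + R2) * M :=
            mul_le_mul ha (hM p.1) (abs_nonneg _) h0
        _ = ρ * ‖p.2‖ + M * R2 := by rw [hρdef]; ring
    have hball : ∀ w ∈ Metric.ball w₀ (1:ℝ), ‖w.1‖ ≤ R1 ∧ |w.2| ≤ R2 := by
      intro w hw
      rw [Metric.mem_ball, Prod.dist_eq, max_lt_iff] at hw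
      constructor
      · have h := hw.1; rw [dist_eq_norm] at h
        have h2 := norm_sub_norm_le w.1 w₀.1
        rw [hR1def]; linarith
      · have h := hw.2; rw [Real.dist_eq] at h
        have h2 := abs_sub_abs_le_abs_sub w.2 w₀.2
        rw [hR2def]; linarith
    have hF'bound : ∀ (p : EuclideanSpace ℝ (Fin d) × EuclideanSpace ℝ (Fin q)),
        ∀ w : EuclideanSpace ℝ (Fin q) × ℝ, ‖w.1‖ ≤ R1 → |w.2| ≤ R2 →
        ‖F' w p‖ ≤ bound p := by
      intro p w h1 h2
      have harg := hargle w h1 h2 p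
      have hexp : Real.exp (((inner ℝ w.1 p.2 : ℝ) + w.2) * K p.1)
          ≤ Real.exp (ρ * ‖p.2‖ + M * R2) :=
        Real.exp_le_exp.2 ((le_abs_self _).trans harg)
      have hc : |c w p| ≤ Real.exp (ρ * ‖p.2‖ + M * R2) * |K p.1| * f x p.2 := by
        rw [hcdef]
        simp only []
        rw [abs_mul, abs_mul, abs_of_nonneg (hfnn p.2), abs_of_nonneg (Real.exp_pos _).le]
        exact mul_le_mul_of_nonneg_right
          (mul_le_mul_of_nonneg_right hexp (abs_nonneg _)) (hfnn _)
      have hAnn : 0 ≤ Real.exp (M * R2) *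
          (|K p.1| * ((‖p.2‖ + 1) * Real.exp (ρ * ‖p.2‖) * f x p.2)) :=
        mul_nonneg (Real.exp_pos _).le (mul_nonneg (abs_nonneg _)
          (mul_nonneg (mul_nonneg (by positivity) (Real.exp_pos _).le) (hfnn _)))
      simp only [hF'def]
      calc ‖c w p • L p.2‖
          ≤ |c w p| * ‖L p.2‖ := by simpa using norm_smul_le (c w p) (L p.2)
        _
          ≤ (Real.exp (ρ * ‖p.2‖ + M * R2) * |K p.1| * f x p.2) * (‖p.2‖ + 1) :=
            mul_le_mul hc (hLnorm p.2) (norm_nonneg _)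
              (mul_nonneg (mul_nonneg (Real.exp_pos _).le (abs_nonneg _)) (hfnn _))
        _ = 1 * (Real.exp (M * R2) *
            (|K p.1| * ((‖p.2‖ + 1) * Real.exp (ρ * ‖p.2‖) * f x p.2))) := by
            rw [Real.exp_add]; ring
        _ ≤ (R1 + R2) * (Real.exp (M * R2) *
            (|K p.1| * ((‖p.2‖ + 1) * Real.exp (ρ * ‖p.2‖) * f x p.2))) :=
            mul_le_mul_of_nonneg_right h1le hAnn
        _ = bound p := by simp only [hbdef, hCstdef]; ring
    -- integrability of the integrand at w₀
    have hw₀1 : ‖w₀.1‖ ≤ R1 := by rw [hR1def]; linarith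
    have hw₀2 : |w₀.2| ≤ R2 := by rw [hR2def]; linarith
    have hFw0int : Integrable (fun p : EuclideanSpace ℝ (Fin d) × EuclideanSpace ℝ (Fin q) =>
        (Real.exp (((inner ℝ w₀.1 p.2 : ℝ) + w₀.2) * K p.1) - 1) * f x p.2) := by
      refine hbound_int.mono' (hFmeas w₀) (Filter.Eventually.of_forall fun p => ?_)
      set t : ℝ := ((inner ℝ w₀.1 p.2 : ℝ) + w₀.2) * K p.1 with htdef
      have ha := hinner w₀ hw₀1 hw₀2 p
      have ht : |t| ≤ (R1 * ‖p.2‖ + R2) * |K p.1| := by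
        rw [htdef, abs_mul]
        exact mul_le_mul_of_nonneg_right ha (abs_nonneg _)
      have hexp : Real.exp |t| ≤ Real.exp (ρ * ‖p.2‖ + M * R2) := by
        refine Real.exp_le_exp.2 ?_
        rw [htdef]; exact hargle w₀ hw₀1 hw₀2 p
      have h0 : 0 ≤ R1 * ‖p.2‖ + R2 := by positivity
      rw [Real.norm_eq_abs, abs_mul, abs_of_nonneg (hfnn p.2)]
      calc |Real.exp t - 1| * f x p.2
          ≤ (|t| * Real.exp |t|) * f x p.2 :=
            mul_le_mul_of_nonneg_right (abs_exp_sub_one_le' t) (hfnn _)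
        _ ≤ (((R1 * ‖p.2‖ + R2) * |K p.1|) * Real.exp (ρ * ‖p.2‖ + M * R2)) * f x p.2 :=
            mul_le_mul_of_nonneg_right
              (mul_le_mul ht hexp (Real.exp_pos _).le (mul_nonneg h0 (abs_nonneg _))) (hfnn _)
        _ ≤ ((((R1 + R2) * (‖p.2‖ + 1)) * |K p.1|) * Real.exp (ρ * ‖p.2‖ + M * R2)) * f x p.2 := by
            have hle : R1 * ‖p.2‖ + R2 ≤ (R1 + R2) * (‖p.2‖ + 1) := by
              nlinarith [norm_nonneg p.2]
            exact mul_le_mul_of_nonneg_right (mul_le_mul_of_nonneg_right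
              (mul_le_mul_of_nonneg_right hle (abs_nonneg _)) (Real.exp_pos _).le) (hfnn _)
        _ = bound p := by simp only [hbdef, hCstdef]; rw [Real.exp_add]; ring
    have hder : HasFDerivAt G (∫ p, F' w₀ p) w₀ := by
      rw [hGdef]
      refine hasFDerivAt_integral_of_dominated_of_fderiv_le (Metric.ball_mem_nhds w₀ one_pos)
        (Filter.Eventually.of_forall hFmeas) hFw0int (hF'meas w₀)
        (Filter.Eventually.of_forall fun p => fun w hw => ?_) hbound_int
        (Filter.Eventually.of_forall fun p => fun w _ => hkey p w)
      obtain ⟨h1, h2⟩ := hball w hw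
      exact hF'bound p w h1 h2
    have hF'int : Integrable (F' w₀) := by
      refine hbound_int.mono' (hF'meas w₀) (Filter.Eventually.of_forall fun p => ?_)
      exact hF'bound p w₀ hw₀1 hw₀2
    have hcont : ContinuousAt (fun w => ∫ p, F' w p) w₀ := by
      refine continuousAt_of_dominated (Filter.Eventually.of_forall hF'meas) ?_ hbound_int ?_
      · filter_upwards [Metric.ball_mem_nhds w₀ one_pos] with w hw
        obtain ⟨h1, h2⟩ := hball w hw
        exact Filter.Eventually.of_forall fun p => hF'bound p w h1 h2
      · refine Filter.Eventually.of_forall fun p => ?_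
        have hcw : Continuous fun w : EuclideanSpace ℝ (Fin q) × ℝ => F' w p := by
          simp only [hF'def, hcdef]
          have hk : Continuous fun w : EuclideanSpace ℝ (Fin q) × ℝ =>
              ((inner ℝ w.1 p.2 : ℝ) + w.2) * K p.1 :=
            ((continuous_fst.inner continuous_const).add continuous_snd).mul continuous_const
          exact (((Real.continuous_exp.comp hk).mul continuous_const).mul
            continuous_const).smul continuous_const
        exact hcw.continuousAt
    exact ⟨hder, hF'int, hcont⟩
  have hdiffble : Differentiable ℝ G := fun w => ((main w).1).differentiableAt
  have hfd : fderiv ℝ G = fun w => ∫ p, F' w p := funext fun w => ((main w).1).fderiv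
  constructor
  · rw [contDiff_one_iff_fderiv]
    refine ⟨hdiffble, ?_⟩
    rw [hfd, continuous_iff_continuousAt]
    exact fun w₀ => (main w₀).2.2
  · intro u v u' v'
    have h1 : fderiv ℝ G (u, v) = ∫ p, F' (u, v) p := ((main (u, v)).1).fderiv
    rw [h1, ContinuousLinearMap.integral_apply (main (u, v)).2.1]
    congr 1
    funext p
    simp only [hF'def, hcdef, ContinuousLinearMap.smul_apply, smul_eq_mul]
    rw [hLapp, real_inner_comm p.2 u']
    ring
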